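/- For all integers n ≥ 2 and k ≥ 1, Σ_{j=0}^{k} (−1)^j · ζ({n}_j) · t*({n}_{k−j}) = (−1)^k · 2^{−nk} · ζ({n}_k), with the conventions ζ({n}_0) = t*({n}_0) = 1. (Equivalently, 1 + Σ_{k≥1} t*({n}_k) x^{kn} = Z_n(e^{πi/n} x/2) / Z_n(e^{πi/n} x), where Z_n(x) = 1 + Σ_{k≥1} ζ({n}_k) x^{kn}.) -/

import Mathlib

/-- Multiple t-star value: sum over weakly decreasing tuples of odd positive
integers.  For `k = 0` this equals `1`, matching the convention
`t*({n}_0) = 1`. -/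
noncomputable def multTStar {k : ℕ} (a : Fin k → ℕ) : ℝ :=
  ∑' n : {f : Fin k → ℕ // Antitone f ∧ ∀ i, Odd (f i)},
    ∏ i, 1 / ((n.1 i : ℝ) ^ (a i))

/-- Multiple zeta value: sum over strictly decreasing tuples of positive
integers.  For `k = 0` this equals `1`, matching the convention
`ζ({n}_0) = 1`. -/
noncomputable def multZeta {k : ℕ} (a : Fin k → ℕ) : ℝ :=
  ∑' n : {f : Fin k → ℕ // StrictAnti f ∧ ∀ i, 0 < f i},
    ∏ i, 1 / ((n.1 i : ℝ) ^ (a i))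

namespace MZV

noncomputable def g (n m : ℕ) : ℝ := 1 / (m : ℝ) ^ n

lemma g_nonneg (n m : ℕ) : 0 ≤ g n m := by
  unfold g; positivity

lemma summable_g {n : ℕ} (hn : 2 ≤ n) : Summable (g n) := by
  unfold g
  exact (Real.summable_one_div_nat_pow).2 (by omega)

lemma summable_pi {n : ℕ} (hn : 2 ≤ n) (k : ℕ) :
    Summable (fun f : Fin k → ℕ => ∏ i, g n (f i)) := by
  induction k with
  | zero => exact summable_of_finite_support (Set.toFinite _)
  | succ k ih =>
    have h2 : Summable (fun p : ℕ × (Fin k → ℕ) => g n p.1 * ∏ i, g n (p.2 i)) := by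
      apply summable_mul_of_summable_norm (f := g n) (g := fun f : Fin k → ℕ => ∏ i, g n (f i))
      · simpa [abs_of_nonneg (g_nonneg n _)] using summable_g hn
      · have : ∀ f : Fin k → ℕ, ‖∏ i, g n (f i)‖ = ∏ i, g n (f i) := fun f => by
          rw [Real.norm_eq_abs, abs_of_nonneg (Finset.prod_nonneg fun i _ => g_nonneg n _)]
        simpa only [this] using ih
    have := h2.comp_injective (Fin.consEquiv (fun _ : Fin (k+1) => ℕ)).symm.injective
    convert this using 2 with f
    · rfl
    rw [Fin.prod_univ_succ]
    rfl

/-! ### index types -/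

/-- strictly decreasing positive tuples -/
def SD (k : ℕ) := {f : Fin k → ℕ // StrictAnti f ∧ ∀ i, 0 < f i}
/-- weakly decreasing odd tuples -/
def WO (k : ℕ) := {f : Fin k → ℕ // Antitone f ∧ ∀ i, Odd (f i)}
/-- finsets of positive naturals of card k -/
def FS (k : ℕ) := {s : Finset ℕ // s.card = k ∧ 0 ∉ s}
/-- multisets of odd naturals of card k -/
def MS (k : ℕ) := {M : Multiset ℕ // Multiset.card M = k ∧ ∀ x ∈ M, Odd x}

noncomputable def sdEquiv (k : ℕ) : SD k ≃ FS k where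
  toFun f := ⟨Finset.image f.1 Finset.univ, by
      rw [Finset.card_image_of_injective _ f.2.1.injective]; simp, by
      simp only [Finset.mem_image, Finset.mem_univ, true_and]
      rintro ⟨i, hi⟩
      exact (f.2.2 i).ne' hi⟩
  invFun s := ⟨fun i => s.1.orderEmbOfFin s.2.1 i.rev, by
      intro i j hij
      exact (s.1.orderEmbOfFin s.2.1).strictMono (by simpa using hij), by
      intro i
      have hmem := Finset.orderEmbOfFin_mem s.1 s.2.1 i.rev
      by_contra hcon
      push_neg at hcon
      rw [Nat.le_zero] at hcon
      rw [hcon] at hmem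
      exact s.2.2 hmem⟩
  left_inv f := by
    obtain ⟨f, hsa, hpos⟩ := f
    apply Subtype.ext
    funext i
    have hu : (fun j : Fin k => f j.rev) = (Finset.image f Finset.univ).orderEmbOfFin
        (by rw [Finset.card_image_of_injective _ hsa.injective]; simp) := by
      apply Finset.orderEmbOfFin_unique
      · intro x; exact Finset.mem_image_of_mem f (Finset.mem_univ _)
      · intro a b hab
        exact hsa (by simpa using hab)
    simp only [← congrFun hu i.rev, Fin.rev_rev]
  right_inv s := by
    obtain ⟨s, hc, h0⟩ := s
    apply Subtype.ext
    ext x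
    simp only [Finset.mem_image, Finset.mem_univ, true_and]
    constructor
    · rintro ⟨i, rfl⟩; exact Finset.orderEmbOfFin_mem s hc i.rev
    · intro hx
      obtain ⟨i, hi⟩ := (Finset.range_orderEmbOfFin s hc ▸
        (Finset.mem_coe.2 hx : x ∈ (s : Set ℕ)) : x ∈ Set.range (s.orderEmbOfFin hc))
      exact ⟨i.rev, by rwa [Fin.rev_rev]⟩

lemma sdEquiv_weight (k : ℕ) (h : ℕ → ℝ) (f : SD k) :
    ∏ m ∈ ((sdEquiv k) f).1, h m = ∏ i, h (f.1 i) := by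
  show ∏ m ∈ Finset.image f.1 Finset.univ, h m = _
  rw [Finset.prod_image]
  intro a _ b _ hab
  exact f.2.1.injective hab

lemma ofFn_get_cast {l : List ℕ} {k : ℕ} (h : l.length = k) :
    List.ofFn (fun i : Fin k => l.get (Fin.cast h.symm i)) = l := by
  apply List.ext_get (by simp [h])
  intro i h1 h2
  simp [List.get_ofFn]

noncomputable def woEquiv (k : ℕ) : WO k ≃ MS k where
  toFun f := ⟨(List.ofFn f.1 : List ℕ), by simp, by
      intro x hx
      rw [Multiset.mem_coe, List.mem_ofFn] at hx
      obtain ⟨i, rfl⟩ := hx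
      exact f.2.2 i⟩
  invFun M := ⟨fun i => (Multiset.sort M.1 (· ≥ ·)).get
      (Fin.cast ((Multiset.length_sort (· ≥ ·)).trans M.2.1).symm i), by
      intro i j hij
      exact (Multiset.pairwise_sort M.1 (· ≥ ·)).rel_get_of_le (by simpa using hij), by
      intro i
      exact M.2.2 _ (Multiset.mem_sort (· ≥ ·) |>.1 (List.get_mem _ _))⟩
  left_inv f := by
    obtain ⟨f, hanti, hodd⟩ := f
    apply Subtype.ext
    apply List.ofFn_injective
    show List.ofFn (fun i : Fin k => _) = _
    rw [ofFn_get_cast ((Multiset.length_sort (· ≥ ·)).trans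
      (by simp : Multiset.card (↑(List.ofFn f) : Multiset ℕ) = k))]
    apply List.Perm.eq_of_pairwise' (Multiset.pairwise_sort _ _)
    · rw [List.pairwise_ofFn]
      intro a b hab
      exact hanti hab.le
    · rw [← Multiset.coe_eq_coe, Multiset.sort_eq]
  right_inv M := by
    obtain ⟨M, hc, hodd⟩ := M
    apply Subtype.ext
    show (↑(List.ofFn (fun i : Fin k => (Multiset.sort M (· ≥ ·)).get
      (Fin.cast ((Multiset.length_sort (· ≥ ·)).trans hc).symm i))) : Multiset ℕ) = M
    rw [ofFn_get_cast ((Multiset.length_sort (· ≥ ·)).trans hc), Multiset.sort_eq]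

lemma woEquiv_weight (k : ℕ) (h : ℕ → ℝ) (f : WO k) :
    (Multiset.map h ((woEquiv k) f).1).prod = ∏ i, h (f.1 i) := by
  show (Multiset.map h ↑(List.ofFn f.1)).prod = _
  rw [Multiset.map_coe, Multiset.prod_coe, List.map_ofFn, List.prod_ofFn]
  rfl

def maxOdd (s : Finset ℕ) : ℕ := ((s.filter (fun m => Odd m)).max).unbotD 0
def maxM (M : Multiset ℕ) : ℕ := (M.toFinset.max).unbotD 0

lemma le_unbot' {o : WithBot ℕ} {x : ℕ} (h : (x : WithBot ℕ) ≤ o) : x ≤ o.unbotD 0 := by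
  cases o with
  | bot => exact absurd h (by simp)
  | coe y => rw [WithBot.unbotD_coe]; exact WithBot.coe_le_coe.1 h

lemma unbot'_le {o : WithBot ℕ} {b : ℕ} (h : o.unbotD 0 ≤ b) : o ≤ (b : WithBot ℕ) := by
  cases o with
  | bot => exact bot_le
  | coe y => rw [WithBot.unbotD_coe] at h; exact WithBot.coe_le_coe.2 h

lemma unbot'_max_eq (b : ℕ) (o : WithBot ℕ) (h : o ≤ (b : WithBot ℕ)) :
    (max (b : WithBot ℕ) o).unbotD 0 = b := by
  rw [max_eq_left h]; rfl

lemma maxOdd_eq_zero {s : Finset ℕ} (h : maxOdd s = 0) : ∀ m ∈ s, ¬ Odd m := by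
  intro m hm hodd
  have hmem : m ∈ s.filter (fun m => Odd m) := Finset.mem_filter.2 ⟨hm, hodd⟩
  have := le_unbot' (Finset.le_max hmem)
  rw [show ((s.filter (fun m => Odd m)).max).unbotD 0 = maxOdd s from rfl, h, Nat.le_zero] at this
  rw [this] at hodd
  simp [Nat.odd_iff] at hodd

lemma maxOdd_mem_aux {s : Finset ℕ} (h : maxOdd s ≠ 0) :
    maxOdd s ∈ s ∧ Odd (maxOdd s) := by
  unfold maxOdd at *
  cases hmax : (s.filter (fun m => Odd m)).max with
  | bot => rw [hmax] at h; simp at h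
  | coe y =>
    have hy : y ∈ s.filter (fun m => Odd m) := Finset.mem_of_max hmax
    rw [WithBot.unbotD_coe]
    simpa using Finset.mem_filter.1 hy

lemma maxOdd_mem {s : Finset ℕ} (h : maxOdd s ≠ 0) : maxOdd s ∈ s := (maxOdd_mem_aux h).1
lemma maxOdd_odd {s : Finset ℕ} (h : maxOdd s ≠ 0) : Odd (maxOdd s) := (maxOdd_mem_aux h).2

lemma le_maxOdd {s : Finset ℕ} {m : ℕ} (hm : m ∈ s) (ho : Odd m) : m ≤ maxOdd s :=
  le_unbot' (Finset.le_max (Finset.mem_filter.2 ⟨hm, ho⟩))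

lemma maxM_eq_zero {M : Multiset ℕ} (hodd : ∀ x ∈ M, Odd x) (h : maxM M = 0) : M = 0 := by
  by_contra hM
  obtain ⟨x, hx⟩ := Multiset.exists_mem_of_ne_zero hM
  have h1 : x ≤ maxM M := le_unbot' (Finset.le_max (Multiset.mem_toFinset.2 hx))
  rw [h, Nat.le_zero] at h1
  have := hodd x hx
  rw [h1] at this
  simp [Nat.odd_iff] at this

lemma maxM_mem {M : Multiset ℕ} (h : maxM M ≠ 0) : maxM M ∈ M := by
  unfold maxM at *
  cases hmax : M.toFinset.max with
  | bot => rw [hmax] at h; simp at h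
  | coe y =>
    rw [WithBot.unbotD_coe]
    exact Multiset.mem_toFinset.1 (Finset.mem_of_max hmax)

lemma le_maxM {M : Multiset ℕ} {x : ℕ} (hx : x ∈ M) : x ≤ maxM M :=
  le_unbot' (Finset.le_max (Multiset.mem_toFinset.2 hx))

lemma maxOdd_insert {s : Finset ℕ} {b : ℕ} (hb : Odd b) (hle : maxOdd s ≤ b) :
    maxOdd (insert b s) = b := by
  unfold maxOdd at *
  rw [Finset.filter_insert, if_pos hb, Finset.max_insert]
  exact unbot'_max_eq _ _ (unbot'_le hle)

lemma maxM_cons {M : Multiset ℕ} {a : ℕ} (hle : maxM M ≤ a) : maxM (a ::ₘ M) = a := by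
  unfold maxM at *
  rw [Multiset.toFinset_cons, Finset.max_insert]
  exact unbot'_max_eq _ _ (unbot'_le hle)

lemma maxOdd_erase_lt {s : Finset ℕ} (h : maxOdd s ≠ 0) :
    maxOdd (s.erase (maxOdd s)) < maxOdd s := by
  set a := maxOdd s with ha
  rcases Nat.eq_zero_or_pos (maxOdd (s.erase a)) with h0 | hpos
  · omega
  · have hmem := maxOdd_mem hpos.ne'
    have hodd := maxOdd_odd hpos.ne'
    have hne := (Finset.mem_erase.1 hmem).1
    have hs := (Finset.mem_erase.1 hmem).2
    exact lt_of_le_of_ne (le_maxOdd hs hodd) hne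


def flipPair (p : Finset ℕ × Multiset ℕ) : Finset ℕ × Multiset ℕ :=
  if maxOdd p.1 < maxM p.2 then (insert (maxM p.2) p.1, p.2.erase (maxM p.2))
  else (p.1.erase (maxOdd p.1), maxOdd p.1 ::ₘ p.2)

lemma flip_spec (k : ℕ) (s : Finset ℕ) (M : Multiset ℕ)
    (hcard : s.card + Multiset.card M = k) (h0 : 0 ∉ s) (hodd : ∀ x ∈ M, Odd x)
    (hnf : ¬(M = 0 ∧ ∀ m ∈ s, ¬ Odd m)) :
    ((flipPair (s, M)).1.card + Multiset.card (flipPair (s, M)).2 = k)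
    ∧ 0 ∉ (flipPair (s, M)).1
    ∧ (∀ x ∈ (flipPair (s, M)).2, Odd x)
    ∧ ¬((flipPair (s, M)).2 = 0 ∧ ∀ m ∈ (flipPair (s, M)).1, ¬ Odd m)
    ∧ flipPair (flipPair (s, M)) = (s, M)
    ∧ ∀ h : ℕ → ℝ, (-1 : ℝ) ^ (flipPair (s, M)).1.card *
          (∏ m ∈ (flipPair (s, M)).1, h m) * ((flipPair (s, M)).2.map h).prod
        = -((-1 : ℝ) ^ s.card * (∏ m ∈ s, h m) * ((M.map h).prod)) := by
  by_cases hab : maxOdd s < maxM M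
  · -- move b = maxM M from the multiset into the finset
    set b := maxM M with hb
    have hbne : b ≠ 0 := by omega
    have hbM : b ∈ M := maxM_mem hbne
    have hbodd : Odd b := hodd b hbM
    have hbs : b ∉ s := fun hmem => absurd (le_maxOdd hmem hbodd) (by omega)
    have hflip : flipPair (s, M) = (insert b s, M.erase b) := by
      rw [flipPair, if_pos hab]
    have hMcard : 1 ≤ Multiset.card M := by
      rcases Multiset.card_pos_iff_exists_mem.2 ⟨b, hbM⟩ with h; omega
    have hnewA : maxOdd (insert b s) = b := maxOdd_insert hbodd hab.le
    have hnewB : maxM (M.erase b) ≤ b := by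
      rcases Nat.eq_zero_or_pos (maxM (M.erase b)) with h | h
      · omega
      · exact le_maxM (Multiset.mem_of_mem_erase (maxM_mem h.ne'))
    have hflip2 : flipPair (insert b s, M.erase b) = (s, M) := by
      rw [flipPair, if_neg (by rw [hnewA]; simpa using hnewB)]
      simp only [hnewA]
      rw [Finset.erase_insert hbs, Multiset.cons_erase hbM]
    rw [hflip]
    refine ⟨?_, ?_, ?_, ?_, hflip2, ?_⟩
    · rw [Finset.card_insert_of_notMem hbs, Multiset.card_erase_of_mem hbM,
        Nat.pred_eq_sub_one]
      omega
    · intro hmem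
      rcases Finset.mem_insert.1 hmem with h | h
      · rw [← h] at hbodd; simp [Nat.odd_iff] at hbodd
      · exact h0 h
    · exact fun x hx => hodd x (Multiset.mem_of_mem_erase hx)
    · rintro ⟨-, hall⟩
      exact hall b (Finset.mem_insert_self b s) hbodd
    · intro h
      rw [Finset.card_insert_of_notMem hbs, Finset.prod_insert hbs]
      have : (M.map h).prod = h b * ((M.erase b).map h).prod := by
        conv_lhs => rw [← Multiset.cons_erase hbM]
        rw [Multiset.map_cons, Multiset.prod_cons]
      rw [this, pow_succ]
      ring
  · -- move a = maxOdd s from the finset into the multiset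
    set a := maxOdd s with ha
    have hane : a ≠ 0 := by
      intro h
      apply hnf
      refine ⟨?_, maxOdd_eq_zero h⟩
      exact maxM_eq_zero hodd (by omega)
    have has : a ∈ s := maxOdd_mem hane
    have haodd : Odd a := maxOdd_odd hane
    have hflip : flipPair (s, M) = (s.erase a, a ::ₘ M) := by
      rw [flipPair, if_neg hab]
    have hnewB : maxM (a ::ₘ M) = a := maxM_cons (by omega)
    have hnewA : maxOdd (s.erase a) < a := maxOdd_erase_lt hane
    have hflip2 : flipPair (s.erase a, a ::ₘ M) = (s, M) := by
      rw [flipPair, if_pos (by rw [hnewB]; exact hnewA)]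
      simp only [hnewB]
      rw [Finset.insert_erase has, Multiset.erase_cons_head]
    rw [hflip]
    obtain ⟨c, hc⟩ : ∃ c, s.card = c + 1 :=
      ⟨s.card - 1, (Nat.succ_pred_eq_of_pos (Finset.card_pos.2 ⟨a, has⟩)).symm⟩
    refine ⟨?_, ?_, ?_, ?_, hflip2, ?_⟩
    · rw [Finset.card_erase_of_mem has, Multiset.card_cons]
      omega
    · exact fun hmem => h0 (Finset.mem_of_mem_erase hmem)
    · intro x hx
      rcases Multiset.mem_cons.1 hx with h | h
      · rw [h]; exact haodd
      · exact hodd x h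
    · rintro ⟨hcontra, -⟩
      exact Multiset.cons_ne_zero hcontra
    · intro h
      rw [Finset.card_erase_of_mem has, hc, Multiset.map_cons, Multiset.prod_cons,
        ← Finset.mul_prod_erase s h has, pow_succ]
      simp only [Nat.add_sub_cancel]
      ring

/-! ### The master index type -/

def Pset (k : ℕ) :=
  {p : Finset ℕ × Multiset ℕ //
    p.1.card + Multiset.card p.2 = k ∧ 0 ∉ p.1 ∧ ∀ x ∈ p.2, Odd x}

noncomputable def HH (n : ℕ) {k : ℕ} (x : Pset k) : ℝ :=
  (-1) ^ x.1.1.card * (∏ m ∈ x.1.1, g n m) * ((x.1.2.map (g n)).prod)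

lemma abs_HH (n : ℕ) {k : ℕ} (x : Pset k) :
    |HH n x| = (∏ m ∈ x.1.1, g n m) * ((x.1.2.map (g n)).prod) := by
  rw [HH, abs_mul, abs_mul, abs_pow, abs_neg, abs_one, one_pow, one_mul,
    abs_of_nonneg (Finset.prod_nonneg fun m _ => g_nonneg n m),
    abs_of_nonneg (Multiset.prod_nonneg fun r hr => by
      obtain ⟨y, _, rfl⟩ := Multiset.mem_map.1 hr
      exact g_nonneg n y)]

def FixSet (k : ℕ) : Set (Pset k) := {x | x.1.2 = 0 ∧ ∀ m ∈ x.1.1, ¬ Odd m}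

/-- the sigma type indexing the left-hand side -/
def SigT (k : ℕ) := Σ j : Fin (k + 1), FS (j : ℕ) × MS (k - (j : ℕ))

def masterFun (k : ℕ) (t : SigT k) : Pset k :=
  ⟨(t.2.1.1, t.2.2.1), by
    rcases t with ⟨j, s, M⟩
    have h1 := s.2.1
    have h2 := M.2.1
    have h3 := j.2
    simp only [h1, h2]
    omega, t.2.1.2.2, t.2.2.2.2⟩

lemma masterFun_bijective (k : ℕ) : Function.Bijective (masterFun k) := by
  constructor
  · rintro ⟨⟨j1, hj1⟩, ⟨s1, hs1c, hs1⟩, ⟨M1, hM1c, hM1⟩⟩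
      ⟨⟨j2, hj2⟩, ⟨s2, hs2c, hs2⟩, ⟨M2, hM2c, hM2⟩⟩ h
    have hpair : (s1, M1) = (s2, M2) := congrArg Subtype.val h
    have hs : s1 = s2 := congrArg Prod.fst hpair
    have hM : M1 = M2 := congrArg Prod.snd hpair
    have hj : j1 = j2 := by
      have e1 : s1.card = j1 := hs1c
      have e2 : s2.card = j2 := hs2c
      rw [hs] at e1
      omega
    subst hj; subst hs; subst hM
    rfl
  · rintro ⟨⟨s, M⟩, hcard, h0, hodd⟩
    have hcard' : s.card + Multiset.card M = k := hcard
    refine ⟨⟨⟨s.card, by omega⟩, ⟨s, rfl, h0⟩, ⟨M, ?_, hodd⟩⟩, rfl⟩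
    show Multiset.card M = k - s.card
    omega

noncomputable def masterEquiv (k : ℕ) : SigT k ≃ Pset k :=
  Equiv.ofBijective _ (masterFun_bijective k)

/-! ### Summability -/

lemma summable_FS {n : ℕ} (hn : 2 ≤ n) (k : ℕ) :
    Summable (fun s : FS k => ∏ m ∈ s.1, g n m) := by
  rw [← Equiv.summable_iff (sdEquiv k)]
  have : ((fun s : FS k => ∏ m ∈ s.1, g n m) ∘ (sdEquiv k)) =
      fun f : SD k => ∏ i, g n (f.1 i) := by
    funext f
    exact sdEquiv_weight k (g n) f
  rw [this]
  exact (summable_pi hn k).comp_injective Subtype.val_injective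

lemma summable_MS {n : ℕ} (hn : 2 ≤ n) (k : ℕ) :
    Summable (fun M : MS k => ((M.1.map (g n)).prod)) := by
  rw [← Equiv.summable_iff (woEquiv k)]
  have : ((fun M : MS k => ((M.1.map (g n)).prod)) ∘ (woEquiv k)) =
      fun f : WO k => ∏ i, g n (f.1 i) := by
    funext f
    exact woEquiv_weight k (g n) f
  rw [this]
  exact (summable_pi hn k).comp_injective Subtype.val_injective

lemma FS_nonneg {n k : ℕ} (s : FS k) : 0 ≤ ∏ m ∈ s.1, g n m :=
  Finset.prod_nonneg fun m _ => g_nonneg n m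

lemma MS_nonneg {n k : ℕ} (M : MS k) : 0 ≤ ((M.1.map (g n)).prod) :=
  Multiset.prod_nonneg fun x hx => by
    obtain ⟨y, _, rfl⟩ := Multiset.mem_map.1 hx
    exact g_nonneg n y

lemma summable_pair {n : ℕ} (hn : 2 ≤ n) (j m : ℕ) :
    Summable (fun q : FS j × MS m => (∏ x ∈ q.1.1, g n x) * ((q.2.1.map (g n)).prod)) := by
  apply summable_mul_of_summable_norm (f := fun s : FS j => ∏ x ∈ s.1, g n x)
    (g := fun M : MS m => ((M.1.map (g n)).prod))
  · have he : ∀ s : FS j, ‖∏ x ∈ s.1, g n x‖ = ∏ x ∈ s.1, g n x := fun s => by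
      rw [Real.norm_eq_abs, abs_of_nonneg (FS_nonneg s)]
    simpa only [he] using summable_FS hn j
  · have he : ∀ M : MS m, ‖(M.1.map (g n)).prod‖ = (M.1.map (g n)).prod := fun M => by
      rw [Real.norm_eq_abs, abs_of_nonneg (MS_nonneg M)]
    simpa only [he] using summable_MS hn m

lemma summable_HH_comp {n : ℕ} (hn : 2 ≤ n) (k : ℕ) :
    Summable (fun t : SigT k => HH n (masterEquiv k t)) := by
  apply Summable.of_abs
  have habs : (fun t : SigT k => |HH n (masterEquiv k t)|) =
      fun t : SigT k => (∏ x ∈ t.2.1.1, g n x) * ((t.2.2.1.map (g n)).prod) := by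
    funext t
    rw [abs_HH]
    rfl
  rw [habs]
  apply (summable_sigma_of_nonneg ?_).2 ⟨?_, ?_⟩
  · intro t
    exact mul_nonneg (FS_nonneg _) (MS_nonneg _)
  · intro j
    exact summable_pair hn _ _
  · exact (hasSum_fintype _).summable

lemma summable_HH {n : ℕ} (hn : 2 ≤ n) (k : ℕ) : Summable (HH n (k := k)) :=
  (Equiv.summable_iff (masterEquiv k)).1 (summable_HH_comp hn k)


/-! ### The moving part sums to zero -/

noncomputable def sigmaFun (k : ℕ) (y : ↥(FixSet k)ᶜ) : ↥(FixSet k)ᶜ :=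
  ⟨⟨flipPair (y.1.1.1, y.1.1.2),
    (flip_spec k y.1.1.1 y.1.1.2 y.1.2.1 y.1.2.2.1 y.1.2.2.2 y.2).1,
    (flip_spec k y.1.1.1 y.1.1.2 y.1.2.1 y.1.2.2.1 y.1.2.2.2 y.2).2.1,
    (flip_spec k y.1.1.1 y.1.1.2 y.1.2.1 y.1.2.2.1 y.1.2.2.2 y.2).2.2.1⟩,
    (flip_spec k y.1.1.1 y.1.1.2 y.1.2.1 y.1.2.2.1 y.1.2.2.2 y.2).2.2.2.1⟩

lemma sigmaFun_involutive (k : ℕ) : Function.Involutive (sigmaFun k) := by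
  intro y
  apply Subtype.ext
  apply Subtype.ext
  show flipPair _ = y.1.1
  exact (flip_spec k y.1.1.1 y.1.1.2 y.1.2.1 y.1.2.2.1 y.1.2.2.2 y.2).2.2.2.2.1

lemma HH_sigmaFun (n k : ℕ) (y : ↥(FixSet k)ᶜ) :
    HH n (sigmaFun k y).1 = - HH n y.1 :=
  (flip_spec k y.1.1.1 y.1.1.2 y.1.2.1 y.1.2.2.1 y.1.2.2.2 y.2).2.2.2.2.2 (g n)

lemma tsum_mov_zero (n k : ℕ) : ∑' y : ↥(FixSet k)ᶜ, HH n y.1 = 0 := by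
  have key : ∑' y : ↥(FixSet k)ᶜ, HH n y.1 = - ∑' y : ↥(FixSet k)ᶜ, HH n y.1 := by
    conv_lhs => rw [← Equiv.tsum_eq ((sigmaFun_involutive k).toPerm)
      (fun y : ↥(FixSet k)ᶜ => HH n y.1)]
    rw [← tsum_neg]
    exact tsum_congr fun y => HH_sigmaFun n k y
  linarith

/-! ### The fixed part -/

lemma two_mul_injective : Function.Injective (fun m : ℕ => 2 * m) :=
  fun a b h => by dsimp only at h; omega

def fixFun (k : ℕ) (t : FS k) : ↥(FixSet k) :=
  ⟨⟨(t.1.image (fun m => 2 * m), 0), by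
      simp only [Multiset.card_zero, Nat.add_zero,
        Finset.card_image_of_injective _ two_mul_injective]
      exact t.2.1, by
      simp only [Finset.mem_image]
      rintro ⟨m, hm, hm0⟩
      have : m = 0 := by omega
      rw [this] at hm
      exact t.2.2 hm, by
      intro x hx
      exact absurd hx (Multiset.notMem_zero x)⟩,
    ⟨rfl, by
      rintro m hmem
      obtain ⟨x, -, rfl⟩ := Finset.mem_image.1 hmem
      simp [Nat.odd_iff, Nat.mul_mod_right]⟩⟩

lemma fixFun_bijective (k : ℕ) : Function.Bijective (fixFun k) := by
  constructor
  · intro t1 t2 h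
    have h2 : t1.1.image (fun m => 2 * m) = t2.1.image (fun m => 2 * m) :=
      congrArg (fun y : ↥(FixSet k) => y.1.1.1) h
    exact Subtype.ext (Finset.image_injective two_mul_injective h2)
  · rintro ⟨⟨⟨s, M⟩, hcard, h0, -⟩, hM0, heven⟩
    have hM0' : M = 0 := hM0
    have heven' : ∀ m ∈ s, ¬ Odd m := heven
    have himg : (s.image (fun m => m / 2)).image (fun m => 2 * m) = s := by
      rw [Finset.image_image]
      have : Finset.image ((fun m => 2 * m) ∘ (fun m => m / 2)) s
          = Finset.image id s := by
        apply Finset.image_congr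
        intro x hx
        have hxe : Even x := Nat.not_odd_iff_even.1 (heven' x hx)
        show 2 * (x / 2) = id x
        exact Nat.two_mul_div_two_of_even hxe
      rw [this, Finset.image_id]
    have hcard' : s.card = k := by
      have := hcard
      simp only [hM0', Multiset.card_zero, Nat.add_zero] at this
      exact this
    have hcardt : (s.image (fun m => m / 2)).card = k := by
      apply le_antisymm
      · rw [← hcard']
        exact Finset.card_image_le
      · have h1 : s.card ≤ (s.image (fun m => m / 2)).card := by
          conv_lhs => rw [← himg]
          exact Finset.card_image_le
        omega
    have h0t : (0 : ℕ) ∉ s.image (fun m => m / 2) := by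
      simp only [Finset.mem_image]
      rintro ⟨m, hm, hm2⟩
      have hme : Even m := Nat.not_odd_iff_even.1 (heven' m hm)
      have : m = 0 := by
        rcases hme with ⟨r, rfl⟩
        omega
      rw [this] at hm
      exact h0 hm
    refine ⟨⟨s.image (fun m => m / 2), hcardt, h0t⟩, ?_⟩
    apply Subtype.ext
    apply Subtype.ext
    show (_, (0 : Multiset ℕ)) = (s, M)
    rw [himg, hM0']

noncomputable def fixEquiv (k : ℕ) : FS k ≃ ↥(FixSet k) :=
  Equiv.ofBijective _ (fixFun_bijective k)

lemma g_two_mul (n m : ℕ) : g n (2 * m) = ((2 : ℝ) ^ n)⁻¹ * g n m := by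
  unfold g
  push_cast
  rw [mul_pow]
  rw [one_div, one_div, mul_inv]

lemma tsum_fix (n k : ℕ) :
    ∑' y : ↥(FixSet k), HH n y.1 =
      (-1 : ℝ) ^ k * ((2 : ℝ) ^ n)⁻¹ ^ k * ∑' t : FS k, ∏ m ∈ t.1, g n m := by
  rw [← Equiv.tsum_eq (fixEquiv k) (fun y : ↥(FixSet k) => HH n y.1)]
  rw [← tsum_mul_left]
  apply tsum_congr
  intro t
  show HH n (fixFun k t).1 = _
  rw [HH]
  show ((-1 : ℝ) ^ (t.1.image (fun m => 2 * m)).card *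
      ∏ m ∈ t.1.image (fun m => 2 * m), g n m) * ((0 : Multiset ℕ).map (g n)).prod = _
  rw [Multiset.map_zero, Multiset.prod_zero, mul_one,
    Finset.card_image_of_injective _ two_mul_injective, t.2.1,
    Finset.prod_image (fun a _ b _ h => two_mul_injective h)]
  have : ∏ m ∈ t.1, g n (2 * m) = ∏ m ∈ t.1, ((2 : ℝ) ^ n)⁻¹ * g n m :=
    Finset.prod_congr rfl fun m _ => g_two_mul n m
  rw [this, Finset.prod_mul_distrib, Finset.prod_const, t.2.1]
  ring


/-! ### Reindexing the multiple zeta/t-star values -/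

lemma multZeta_eq (n k : ℕ) :
    multZeta (fun _ : Fin k => n) = ∑' t : FS k, ∏ m ∈ t.1, g n m := by
  rw [multZeta, ← Equiv.tsum_eq (sdEquiv k) (fun t : FS k => ∏ m ∈ t.1, g n m)]
  exact tsum_congr fun f => (sdEquiv_weight k (g n) f).symm

lemma multTStar_eq (n k : ℕ) :
    multTStar (fun _ : Fin k => n) = ∑' M : MS k, ((M.1.map (g n)).prod) := by
  rw [multTStar, ← Equiv.tsum_eq (woEquiv k) (fun M : MS k => ((M.1.map (g n)).prod))]
  exact tsum_congr fun f => (woEquiv_weight k (g n) f).symm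

end MZV

set_option maxHeartbeats 2000000 in
open MZV in
/-- `Σ_{j=0}^{k} (−1)^j ζ({n}_j) t*({n}_{k−j}) = (−1)^k 2^{−nk} ζ({n}_k)`,
the coefficient form of the generating function identity
`1 + Σ t*({n}_k) x^(kn) = Z_n(e^(πi/n) x/2)/Z_n(e^(πi/n) x)`. -/
theorem multTStar_repeat_gen_fun (n k : ℕ) (hn : 2 ≤ n) (hk : 1 ≤ k) :
    ∑ j ∈ Finset.range (k + 1),
        (-1 : ℝ) ^ j * multZeta (fun _ : Fin j => n) *
          multTStar (fun _ : Fin (k - j) => n) =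
      (-1 : ℝ) ^ k * ((2 : ℝ) ^ (n * k))⁻¹ * multZeta (fun _ : Fin k => n) := by
  classical
  have hterm : ∀ j : ℕ,
      (-1 : ℝ) ^ j * multZeta (fun _ : Fin j => n) * multTStar (fun _ : Fin (k - j) => n)
        = ∑' q : FS j × MS (k - j),
            (-1 : ℝ) ^ j * ((∏ m ∈ q.1.1, g n m) * ((Multiset.map (g n) q.2.1).prod)) := by
    intro j
    rw [multZeta_eq n j, multTStar_eq n (k - j), mul_assoc,
      Summable.tsum_mul_tsum (summable_FS hn j) (summable_MS hn (k - j)) (summable_pair hn j (k - j)),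
      ← tsum_mul_left]
  have hFH : ∀ p : SigT k, HH n (masterEquiv k p)
      = (-1 : ℝ) ^ ((p.1 : Fin (k+1)) : ℕ) *
          ((∏ m ∈ p.2.1.1, g n m) * ((Multiset.map (g n) p.2.2.1).prod)) := by
    intro p
    show (-1 : ℝ) ^ (p.2.1.1.card) * (∏ m ∈ p.2.1.1, g n m) *
        ((Multiset.map (g n) p.2.2.1).prod) = _
    rw [p.2.1.2.1, mul_assoc]
  have hsum2 : Summable (fun p : SigT k => (-1 : ℝ) ^ ((p.1 : Fin (k+1)) : ℕ) *
      ((∏ m ∈ p.2.1.1, g n m) * ((Multiset.map (g n) p.2.2.1).prod))) := by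
    have := summable_HH_comp hn k
    rwa [show (fun t : SigT k => HH n (masterEquiv k t))
      = fun p : SigT k => (-1 : ℝ) ^ ((p.1 : Fin (k+1)) : ℕ) *
          ((∏ m ∈ p.2.1.1, g n m) * ((Multiset.map (g n) p.2.2.1).prod)) from funext hFH] at this
  calc
    ∑ j ∈ Finset.range (k + 1),
        (-1 : ℝ) ^ j * multZeta (fun _ : Fin j => n) * multTStar (fun _ : Fin (k - j) => n)
      = ∑ j : Fin (k + 1), ∑' q : FS (j : ℕ) × MS (k - (j : ℕ)),
          (-1 : ℝ) ^ (j : ℕ) * ((∏ m ∈ q.1.1, g n m) * ((Multiset.map (g n) q.2.1).prod)) := by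
        rw [← Fin.sum_univ_eq_sum_range]
        exact Finset.sum_congr rfl fun j _ => hterm (j : ℕ)
    _ = ∑' j : Fin (k + 1), ∑' q : FS (j : ℕ) × MS (k - (j : ℕ)),
          (-1 : ℝ) ^ (j : ℕ) * ((∏ m ∈ q.1.1, g n m) * ((Multiset.map (g n) q.2.1).prod)) :=
        (tsum_fintype _).symm
    _ = ∑' p : SigT k, (-1 : ℝ) ^ ((p.1 : Fin (k+1)) : ℕ) *
          ((∏ m ∈ p.2.1.1, g n m) * ((Multiset.map (g n) p.2.2.1).prod)) := by
        refine (Summable.tsum_sigma' (fun j => ?_) hsum2).symm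
        exact Summable.mul_left ((-1 : ℝ) ^ (j : ℕ)) (summable_pair hn (j : ℕ) (k - (j : ℕ)))
    _ = ∑' p : SigT k, HH n (masterEquiv k p) := (tsum_congr fun p => (hFH p).symm)
    _ = ∑' x : Pset k, HH n x := Equiv.tsum_eq (masterEquiv k) (HH n)
    _ = (∑' y : ↥(FixSet k), HH n y.1) + ∑' y : ↥(FixSet k)ᶜ, HH n y.1 :=
        (Summable.tsum_add_tsum_compl ((summable_HH hn k).subtype _)
          ((summable_HH hn k).subtype _)).symm
    _ = (-1 : ℝ) ^ k * ((2 : ℝ) ^ n)⁻¹ ^ k * ∑' t : FS k, ∏ m ∈ t.1, g n m := by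
        rw [tsum_mov_zero n k, add_zero, tsum_fix n k]
    _ = (-1 : ℝ) ^ k * ((2 : ℝ) ^ (n * k))⁻¹ * multZeta (fun _ : Fin k => n) := by
        rw [multZeta_eq n k, pow_mul]
        ring
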